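/- arXiv:2402.08362 — 4 statements merged into one kernel-verified Lean document; each statement's English description precedes it below -/
import Mathlib

section
/- Let ψ be a 4×4 complex matrix with ψ†ψ = I₄ (ψ unitary) and det ψ = 1, and let (j₁,j₂,j₃,j₄) be an even permutation of (1,2,3,4). Then the j₄-th column of ψ equals 𝒢[conj(u_{j₁}), conj(u_{j₂}), conj(u_{j₃})], where u_j denotes the j-th column of ψ and conj denotes entrywise complex conjugation. -/
open scoped BigOperators Matrix

/-- The generalized cross product on `ℂ⁴`:
`𝒢[u₁,u₂,u₃] = ∑ j, det(u₁,u₂,u₃,eⱼ) • eⱼ`, where the determinant is that of the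
`4×4` matrix whose columns are `u₁,u₂,u₃,eⱼ`. -/
noncomputable def crossG (u v w : Fin 4 → ℂ) : Fin 4 → ℂ :=
  ∑ j : Fin 4,
    (Matrix.of fun i k : Fin 4 =>
      ![u, v, w, (Pi.single j 1 : Fin 4 → ℂ)] k i).det • (Pi.single j 1 : Fin 4 → ℂ)

/-- If `ψ` is a unitary `4×4` complex matrix with `det ψ = 1` and `(p 0, p 1, p 2, p 3)`
is an even permutation of `(0,1,2,3)`, then the `p 3`-th column of `ψ` equals the
generalized cross product of the complex conjugates of the `p 0`-th, `p 1`-th and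
`p 2`-th columns of `ψ`. -/
theorem column_eq_crossG_of_unitary (ψ : Matrix (Fin 4) (Fin 4) ℂ)
    (hunit : ψᴴ * ψ = 1) (hdet : ψ.det = 1)
    (p : Equiv.Perm (Fin 4)) (hp : Equiv.Perm.sign p = 1) :
    (fun i => ψ i (p 3)) =
      crossG (fun i => (starRingEnd ℂ) (ψ i (p 0)))
        (fun i => (starRingEnd ℂ) (ψ i (p 1)))
        (fun i => (starRingEnd ℂ) (ψ i (p 2))) := by
  classical
  have hψψH : ψ * ψᴴ = 1 := mul_eq_one_comm.mp hunit
  set C : Matrix (Fin 4) (Fin 4) ℂ := ψ.submatrix id p with hC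
  set D : Matrix (Fin 4) (Fin 4) ℂ :=
    Matrix.of (fun k i => (starRingEnd ℂ) (ψ i (p k))) with hD
  have hCD : C * D = 1 := by
    ext i j
    have : ∑ k : Fin 4, ψ i (p k) * (starRingEnd ℂ) (ψ j (p k))
        = ∑ m : Fin 4, ψ i m * (starRingEnd ℂ) (ψ j m) :=
      Equiv.sum_comp p (fun m => ψ i m * (starRingEnd ℂ) (ψ j m))
    have h2 : (ψ * ψᴴ) i j = ∑ m : Fin 4, ψ i m * (starRingEnd ℂ) (ψ j m) := by
      simp [Matrix.mul_apply, Matrix.conjTranspose_apply]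
    simp only [Matrix.mul_apply, hC, hD, Matrix.submatrix_apply, Matrix.of_apply, id_eq]
    rw [this, ← h2, hψψH]
  have hDC : D * C = 1 := mul_eq_one_comm.mp hCD
  have hdetC : C.det = 1 := by
    have h := Matrix.det_permute p ψᵀ
    have hCt : Cᵀ = (ψᵀ).submatrix p id := by
      ext i j; simp [hC, Matrix.transpose_apply]
    rw [← Matrix.det_transpose C, hCt, h, Matrix.det_transpose, hdet, hp]
    simp
  funext i
  -- reduce crossG to the single determinant
  have hcross : crossG (fun i => (starRingEnd ℂ) (ψ i (p 0)))
        (fun i => (starRingEnd ℂ) (ψ i (p 1)))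
        (fun i => (starRingEnd ℂ) (ψ i (p 2))) i
      = (Matrix.of fun a k : Fin 4 =>
          ![(fun i => (starRingEnd ℂ) (ψ i (p 0))),
            (fun i => (starRingEnd ℂ) (ψ i (p 1))),
            (fun i => (starRingEnd ℂ) (ψ i (p 2))),
            (Pi.single i 1 : Fin 4 → ℂ)] k a).det := by
    simp [crossG, Pi.single_apply, Finset.sum_apply, mul_ite]
  rw [hcross]
  -- identify the matrix with a conjugated updateColumn
  set N : Matrix (Fin 4) (Fin 4) ℂ := C.updateCol 3 (Pi.single i 1) with hN
  have hM : (Matrix.of fun a k : Fin 4 =>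
          ![(fun i => (starRingEnd ℂ) (ψ i (p 0))),
            (fun i => (starRingEnd ℂ) (ψ i (p 1))),
            (fun i => (starRingEnd ℂ) (ψ i (p 2))),
            (Pi.single i 1 : Fin 4 → ℂ)] k a) = N.map (starRingEnd ℂ) := by
    ext a k
    fin_cases k <;>
      simp [hN, hC, Matrix.updateCol_apply, Pi.single_apply, apply_ite]
  rw [hM]
  rw [← RingHom.mapMatrix_apply, ← RingHom.map_det]
  -- det N via cramer
  have hdetN : N.det = Matrix.cramer C (Pi.single i 1) 3 := by
    rw [Matrix.cramer_apply]
  have hcram : C *ᵥ Matrix.cramer C (Pi.single i 1) = Pi.single i 1 := by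
    rw [Matrix.mulVec_cramer, hdetC, one_smul]
  have hx : Matrix.cramer C (Pi.single i 1) = D *ᵥ (Pi.single i 1) := by
    calc Matrix.cramer C (Pi.single i 1)
        = (D * C) *ᵥ Matrix.cramer C (Pi.single i 1) := by
          rw [hDC, Matrix.one_mulVec]
      _ = D *ᵥ (C *ᵥ Matrix.cramer C (Pi.single i 1)) := by
          rw [← Matrix.mulVec_mulVec]
      _ = D *ᵥ Pi.single i 1 := by rw [hcram]
  have hval : Matrix.cramer C (Pi.single i 1) 3 = D 3 i := by
    rw [hx, Matrix.mulVec_single]; simp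
  rw [hdetN, hval]
  simp [hD]
end

section
/- Let Q : ℝ² → M₂(ℂ) be twice continuously differentiable in (x,t) with Qᵀ = Q (symmetric). Define the 4×4 matrix-valued functions U = [[0, Q],[−Q†, 0]] (blocks), σ = diag(1,1,−1,−1), and for λ ∈ ℂ set V(λ) = −2iλ²σ + 2λU + iσ(U_x − U²). Then Q satisfies the spin-1 Gross–Pitaevskii equation i·Q_t + Q_{xx} + 2·Q·Q†·Q = 0 on ℝ² if and only if the zero-curvature equation U_t − ∂_x V(λ) + [−iλσ + U, V(λ)] = 0 holds on ℝ² for every λ ∈ ℂ. -/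
open scoped Matrix

/-- Entrywise partial derivative in the first (`x`) variable of a matrix-valued
function on `ℝ²`. -/
noncomputable def matDx {m n : Type*} (F : ℝ × ℝ → Matrix m n ℂ) : ℝ × ℝ → Matrix m n ℂ :=
  fun p => Matrix.of fun i j => fderiv ℝ (fun q => F q i j) p (1, 0)

/-- Entrywise partial derivative in the second (`t`) variable of a matrix-valued
function on `ℝ²`. -/
noncomputable def matDt {m n : Type*} (F : ℝ × ℝ → Matrix m n ℂ) : ℝ × ℝ → Matrix m n ℂ :=
  fun p => Matrix.of fun i j => fderiv ℝ (fun q => F q i j) p (0, 1)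

/-- The potential matrix `U = [[0, Q],[−Q†, 0]]`. -/
noncomputable def Umat (Q : ℝ × ℝ → Matrix (Fin 2) (Fin 2) ℂ) :
    ℝ × ℝ → Matrix (Fin 2 ⊕ Fin 2) (Fin 2 ⊕ Fin 2) ℂ :=
  fun p => Matrix.fromBlocks 0 (Q p) (-(Q p)ᴴ) 0

/-- The matrix `σ = diag(1,1,−1,−1)`. -/
noncomputable def sigma4 : Matrix (Fin 2 ⊕ Fin 2) (Fin 2 ⊕ Fin 2) ℂ :=
  Matrix.fromBlocks 1 0 0 (-1)

/-- The second Lax matrix `V(λ) = −2iλ²σ + 2λU + iσ(U_x − U²)`. -/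
noncomputable def Vmat (Q : ℝ × ℝ → Matrix (Fin 2) (Fin 2) ℂ) (lam : ℂ) :
    ℝ × ℝ → Matrix (Fin 2 ⊕ Fin 2) (Fin 2 ⊕ Fin 2) ℂ :=
  fun p => (-2 * Complex.I * lam ^ 2) • sigma4 + (2 * lam) • Umat Q p +
    Complex.I • (sigma4 * (matDx (Umat Q) p - Umat Q p * Umat Q p))

/-! ### Auxiliary machinery -/

/-- Entrywise directional derivative of a matrix-valued function. -/
noncomputable def dmat {m n : Type*} (v : ℝ × ℝ) (F : ℝ × ℝ → Matrix m n ℂ) :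
    ℝ × ℝ → Matrix m n ℂ :=
  fun p => Matrix.of fun i j => fderiv ℝ (fun q => F q i j) p v

lemma matDx_eq {m n : Type*} (F : ℝ × ℝ → Matrix m n ℂ) : matDx F = dmat (1, 0) F := rfl

lemma matDt_eq {m n : Type*} (F : ℝ × ℝ → Matrix m n ℂ) : matDt F = dmat (0, 1) F := rfl

section DmatLemmas

variable {m n l : Type*} {p v : ℝ × ℝ}

lemma dmat_add (F G : ℝ × ℝ → Matrix m n ℂ)
    (hF : ∀ i j, DifferentiableAt ℝ (fun q => F q i j) p)
    (hG : ∀ i j, DifferentiableAt ℝ (fun q => G q i j) p) :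
    dmat v (fun q => F q + G q) p = dmat v F p + dmat v G p := by
  ext i j
  simp only [dmat, Matrix.of_apply, Matrix.add_apply]
  rw [fderiv_fun_add (hF i j) (hG i j)]
  simp

lemma dmat_sub (F G : ℝ × ℝ → Matrix m n ℂ)
    (hF : ∀ i j, DifferentiableAt ℝ (fun q => F q i j) p)
    (hG : ∀ i j, DifferentiableAt ℝ (fun q => G q i j) p) :
    dmat v (fun q => F q - G q) p = dmat v F p - dmat v G p := by
  ext i j
  simp only [dmat, Matrix.of_apply, Matrix.sub_apply]
  rw [fderiv_fun_sub (hF i j) (hG i j)]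
  simp

lemma dmat_smul (c : ℂ) (F : ℝ × ℝ → Matrix m n ℂ)
    (hF : ∀ i j, DifferentiableAt ℝ (fun q => F q i j) p) :
    dmat v (fun q => c • F q) p = c • dmat v F p := by
  ext i j
  simp only [dmat, Matrix.of_apply, Matrix.smul_apply, smul_eq_mul]
  rw [fderiv_const_mul (hF i j) c]
  simp

lemma dmat_const (C : Matrix m n ℂ) : dmat v (fun _ => C) p = 0 := by
  ext i j
  simp [dmat]

lemma dmat_mul [Fintype n] (F : ℝ × ℝ → Matrix m n ℂ) (G : ℝ × ℝ → Matrix n l ℂ)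
    (hF : ∀ i j, DifferentiableAt ℝ (fun q => F q i j) p)
    (hG : ∀ i j, DifferentiableAt ℝ (fun q => G q i j) p) :
    dmat v (fun q => F q * G q) p = dmat v F p * G p + F p * dmat v G p := by
  ext i j
  simp only [dmat, Matrix.of_apply, Matrix.add_apply, Matrix.mul_apply]
  rw [fderiv_fun_sum (fun x _ => ((hF i x).fun_mul (hG x j)))]
  simp only [ContinuousLinearMap.sum_apply]
  rw [← Finset.sum_add_distrib]
  refine Finset.sum_congr rfl fun x _ => ?_
  rw [fderiv_fun_mul (hF i x) (hG x j)]
  simp only [ContinuousLinearMap.add_apply, ContinuousLinearMap.smul_apply, smul_eq_mul]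
  ring

lemma entryDiffAt_mul [Fintype n] (F : ℝ × ℝ → Matrix m n ℂ) (G : ℝ × ℝ → Matrix n l ℂ)
    (hF : ∀ i j, DifferentiableAt ℝ (fun q => F q i j) p)
    (hG : ∀ i j, DifferentiableAt ℝ (fun q => G q i j) p) :
    ∀ i j, DifferentiableAt ℝ (fun q => (F q * G q) i j) p := by
  intro i j
  simp only [Matrix.mul_apply]
  exact DifferentiableAt.fun_sum fun x _ => (hF i x).mul (hG x j)

end DmatLemmas

lemma Umat_entry_eq₁₁ (R : ℝ × ℝ → Matrix (Fin 2) (Fin 2) ℂ) (i j : Fin 2) :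
    (fun q => Umat R q (Sum.inl i) (Sum.inl j)) = fun _ => (0 : ℂ) := by
  funext q; simp [Umat]

lemma Umat_entry_eq₁₂ (R : ℝ × ℝ → Matrix (Fin 2) (Fin 2) ℂ) (i j : Fin 2) :
    (fun q => Umat R q (Sum.inl i) (Sum.inr j)) = fun q => R q i j := by
  funext q; simp [Umat]

lemma Umat_entry_eq₂₁ (R : ℝ × ℝ → Matrix (Fin 2) (Fin 2) ℂ) (i j : Fin 2) :
    (fun q => Umat R q (Sum.inr i) (Sum.inl j)) = fun q => -(star (R q j i)) := by
  funext q; simp [Umat]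

lemma Umat_entry_eq₂₂ (R : ℝ × ℝ → Matrix (Fin 2) (Fin 2) ℂ) (i j : Fin 2) :
    (fun q => Umat R q (Sum.inr i) (Sum.inr j)) = fun _ => (0 : ℂ) := by
  funext q; simp [Umat]

lemma Umat_entry_diff (R : ℝ × ℝ → Matrix (Fin 2) (Fin 2) ℂ)
    (hR : ∀ i j, Differentiable ℝ fun q => R q i j) :
    ∀ i j, Differentiable ℝ fun q => Umat R q i j := by
  rintro (i | i) (j | j)
  · rw [Umat_entry_eq₁₁]; exact differentiable_const _
  · rw [Umat_entry_eq₁₂]; exact hR i j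
  · rw [Umat_entry_eq₂₁]; exact ((hR j i).star).neg
  · rw [Umat_entry_eq₂₂]; exact differentiable_const _

lemma dmat_Umat (R : ℝ × ℝ → Matrix (Fin 2) (Fin 2) ℂ) (v : ℝ × ℝ) :
    dmat v (Umat R) = Umat (dmat v R) := by
  funext p
  ext i j
  rcases i with i | i <;> rcases j with j | j
  · simp only [dmat, Matrix.of_apply]
    rw [Umat_entry_eq₁₁]
    simp [Umat]
  · simp only [dmat, Matrix.of_apply]
    rw [Umat_entry_eq₁₂]
    simp [Umat, dmat]
  · simp only [dmat, Matrix.of_apply]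
    rw [Umat_entry_eq₂₁]
    have : (fun q => -(star (R q j i))) = fun q => -(star ((fun q' => R q' j i) q)) := rfl
    rw [this, fderiv_fun_neg, fderiv_star]
    simp [Umat, dmat]
  · simp only [dmat, Matrix.of_apply]
    rw [Umat_entry_eq₂₂]
    simp [Umat]

lemma sigma4_sq : sigma4 * sigma4 = 1 := by
  rw [sigma4, Matrix.fromBlocks_multiply]
  simp [← Matrix.fromBlocks_one]

lemma offdiag_anticomm (A B : Matrix (Fin 2) (Fin 2) ℂ) :
    Matrix.fromBlocks 0 A B 0 * sigma4 = -(sigma4 * Matrix.fromBlocks 0 A B 0) := by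
  rw [sigma4, Matrix.fromBlocks_multiply, Matrix.fromBlocks_multiply]
  simp [Matrix.fromBlocks_neg]

/-- The core algebraic reduction of the zero-curvature expression. -/
lemma reduce {N : Type*} [Fintype N] [DecidableEq N] (s u ux uxx ut : Matrix N N ℂ)
    (hss : s * s = 1) (hus : u * s = -(s * u)) (huxs : ux * s = -(s * ux)) (lam : ℂ) :
    ut - ((2 * lam) • ux + Complex.I • (s * (uxx - (ux * u + u * ux)))) +
      ((((-Complex.I * lam) • s + u) *
          ((-2 * Complex.I * lam ^ 2) • s + (2 * lam) • u + Complex.I • (s * (ux - u * u))) -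
        ((-2 * Complex.I * lam ^ 2) • s + (2 * lam) • u + Complex.I • (s * (ux - u * u))) *
          ((-Complex.I * lam) • s + u))) =
    ut - Complex.I • (s * (uxx - (2 : ℂ) • (u * (u * u)))) := by
  have h1 : ∀ X : Matrix N N ℂ, u * (s * X) = -(s * (u * X)) := fun X => by
    rw [← mul_assoc, hus, neg_mul, mul_assoc]
  have h2 : ∀ X : Matrix N N ℂ, ux * (s * X) = -(s * (ux * X)) := fun X => by
    rw [← mul_assoc, huxs, neg_mul, mul_assoc]
  have h3 : ∀ X : Matrix N N ℂ, s * (s * X) = X := fun X => by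
    rw [← mul_assoc, hss, one_mul]
  simp only [mul_add, add_mul, mul_sub, sub_mul, smul_mul_assoc, mul_smul_comm, smul_smul,
    mul_assoc, hss, hus, huxs, h1, h2, h3, smul_add, smul_sub, smul_neg, neg_mul, mul_neg,
    neg_neg, mul_one, one_mul]
  match_scalars <;> (first | ring1 | (ring_nf; simp [Complex.I_sq]; try ring1))

lemma Xsq (q : Matrix (Fin 2) (Fin 2) ℂ) :
    Matrix.fromBlocks 0 q (-qᴴ) 0 * Matrix.fromBlocks 0 q (-qᴴ) 0
      = Matrix.fromBlocks (-(q * qᴴ)) 0 0 (-(qᴴ * q)) := by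
  rw [Matrix.fromBlocks_multiply]
  simp

lemma Xcube (q : Matrix (Fin 2) (Fin 2) ℂ) :
    Matrix.fromBlocks 0 q (-qᴴ) 0 *
        (Matrix.fromBlocks 0 q (-qᴴ) 0 * Matrix.fromBlocks 0 q (-qᴴ) 0)
      = Matrix.fromBlocks 0 (-(q * qᴴ * q)) (qᴴ * (q * qᴴ)) 0 := by
  rw [Xsq, Matrix.fromBlocks_multiply]
  simp [mul_assoc]

/-- The reduced zero-curvature matrix vanishes iff the GP equation holds. -/
lemma key2aux (q qt qxx : Matrix (Fin 2) (Fin 2) ℂ) :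
    (Matrix.fromBlocks 0 qt (-(qtᴴ)) 0 -
        Complex.I • (sigma4 *
          (Matrix.fromBlocks 0 qxx (-(qxxᴴ)) 0 -
            (2 : ℂ) • (Matrix.fromBlocks 0 q (-qᴴ) 0 *
              (Matrix.fromBlocks 0 q (-qᴴ) 0 * Matrix.fromBlocks 0 q (-qᴴ) 0)))) = 0) ↔
      (Complex.I • qt + qxx + (2 : ℂ) • (q * qᴴ * q) = 0) := by
  set TR : Matrix (Fin 2) (Fin 2) ℂ := qt - Complex.I • (qxx + (2 : ℂ) • (q * qᴴ * q)) with hTRdef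
  have hblock : Matrix.fromBlocks 0 qt (-(qtᴴ)) 0 -
        Complex.I • (sigma4 *
          (Matrix.fromBlocks 0 qxx (-(qxxᴴ)) 0 -
            (2 : ℂ) • (Matrix.fromBlocks 0 q (-qᴴ) 0 *
              (Matrix.fromBlocks 0 q (-qᴴ) 0 * Matrix.fromBlocks 0 q (-qᴴ) 0))))
      = Matrix.fromBlocks 0 TR (-(TRᴴ)) 0 := by
    rw [Xcube, sigma4, hTRdef]
    simp only [sub_eq_add_neg, Matrix.fromBlocks_smul, Matrix.fromBlocks_neg,
      Matrix.fromBlocks_add, Matrix.fromBlocks_multiply, Matrix.conjTranspose_add,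
      Matrix.conjTranspose_neg, Matrix.conjTranspose_smul, Matrix.conjTranspose_mul,
      Matrix.conjTranspose_conjTranspose]
    refine Matrix.fromBlocks_inj.mpr ⟨?_, ?_, ?_, ?_⟩ <;>
      · simp only [neg_one_mul, one_mul, zero_mul, mul_zero, smul_zero, neg_zero, add_zero,
          zero_add, smul_neg, neg_neg, Complex.star_def, Complex.conj_I, Complex.conj_ofNat]
        try rfl
        try match_scalars <;> (first | ring1 | (ring_nf; simp [Complex.I_sq]; try ring1))
  rw [hblock]
  have hiff : Matrix.fromBlocks 0 TR (-(TRᴴ)) 0 = 0 ↔ TR = 0 := by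
    constructor
    · intro h
      ext i j
      have h2 := congrFun (congrFun h (Sum.inl i)) (Sum.inr j)
      simpa using h2
    · intro h
      rw [h]
      simp [← Matrix.fromBlocks_zero]
  rw [hiff]
  constructor
  · intro h
    have hc : Complex.I • qt + qxx + (2 : ℂ) • (q * qᴴ * q) = Complex.I • TR := by
      rw [hTRdef]
      match_scalars <;> (first | ring1 | (ring_nf; simp [Complex.I_sq]; try ring1))
    rw [hc, h, smul_zero]
  · intro h
    rw [add_assoc, add_comm (Complex.I • qt)] at h
    have h2 : qxx + (2 : ℂ) • (q * qᴴ * q) = -(Complex.I • qt) :=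
      eq_neg_of_add_eq_zero_left h
    rw [hTRdef, h2]
    simp [smul_smul, Complex.I_mul_I]

/-- For a symmetric, twice continuously differentiable `Q : ℝ² → M₂(ℂ)`, the spin-1
Gross–Pitaevskii equation `i Q_t + Q_xx + 2 Q Q† Q = 0` holds on `ℝ²` if and only if
the zero-curvature equation `U_t − ∂ₓV(λ) + [−iλσ + U, V(λ)] = 0` holds on `ℝ²` for
every `λ ∈ ℂ`. -/
theorem spin1GP_iff_zero_curvature (Q : ℝ × ℝ → Matrix (Fin 2) (Fin 2) ℂ)
    (hC2 : ∀ i j, ContDiff ℝ 2 fun p => Q p i j)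
    (hsym : ∀ p, (Q p)ᵀ = Q p) :
    (∀ p : ℝ × ℝ,
        Complex.I • matDt Q p + matDx (matDx Q) p + (2 : ℂ) • (Q p * (Q p)ᴴ * Q p) = 0) ↔
    (∀ (lam : ℂ) (p : ℝ × ℝ),
        matDt (Umat Q) p - matDx (Vmat Q lam) p +
          (((-Complex.I * lam) • sigma4 + Umat Q p) * Vmat Q lam p -
            Vmat Q lam p * ((-Complex.I * lam) • sigma4 + Umat Q p)) = 0) := by
  have hQd : ∀ i j, Differentiable ℝ fun q => Q q i j := fun i j =>
    (hC2 i j).differentiable two_ne_zero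
  have hQxd : ∀ i j, Differentiable ℝ fun p' => matDx Q p' i j := by
    intro i j
    have h1 : ContDiff ℝ 1 fun p' => (fderiv ℝ (fun q => Q q i j) p') (1, 0) :=
      ((hC2 i j).fderiv_right (by norm_num)).clm_apply contDiff_const
    exact h1.differentiable one_ne_zero
  have hUQd : ∀ i j, Differentiable ℝ fun q => Umat Q q i j := Umat_entry_diff Q hQd
  have hUQxd : ∀ i j, Differentiable ℝ fun q => Umat (matDx Q) q i j :=
    Umat_entry_diff _ hQxd
  have hUx : matDx (Umat Q) = Umat (matDx Q) := by
    rw [matDx_eq, dmat_Umat Q]; rfl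
  have hUt : matDt (Umat Q) = Umat (matDt Q) := by
    rw [matDt_eq, dmat_Umat Q]; rfl
  have hVx : ∀ (lam : ℂ) (p : ℝ × ℝ), matDx (Vmat Q lam) p =
      (2 * lam) • Umat (matDx Q) p +
        Complex.I • (sigma4 * (Umat (matDx (matDx Q)) p -
          (Umat (matDx Q) p * Umat Q p + Umat Q p * Umat (matDx Q) p))) := by
    intro lam p
    have hVeq : Vmat Q lam = fun q =>
        ((-2 * Complex.I * lam ^ 2) • sigma4 + (2 * lam) • Umat Q q) +
          Complex.I • (sigma4 * (Umat (matDx Q) q - Umat Q q * Umat Q q)) := by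
      funext q
      simp only [Vmat, hUx]
    have hA2 : ∀ i j, DifferentiableAt ℝ
        (fun q => (((2 : ℂ) * lam) • Umat Q q) i j) p := by
      intro i j
      simp only [Matrix.smul_apply, smul_eq_mul]
      exact ((hUQd i j) p).const_mul _
    have hA : ∀ i j, DifferentiableAt ℝ
        (fun q => ((-2 * Complex.I * lam ^ 2) • sigma4 + (2 * lam) • Umat Q q) i j) p := by
      intro i j
      simp only [Matrix.add_apply, Matrix.smul_apply, smul_eq_mul]
      exact (differentiableAt_const _).add (((hUQd i j) p).const_mul _)
    have hW : ∀ i j, DifferentiableAt ℝ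
        (fun q => (Umat (matDx Q) q - Umat Q q * Umat Q q) i j) p := by
      intro i j
      simp only [Matrix.sub_apply]
      exact ((hUQxd i j) p).sub
        (entryDiffAt_mul _ _ (fun i j => (hUQd i j) p) (fun i j => (hUQd i j) p) i j)
    have hSW : ∀ i j, DifferentiableAt ℝ
        (fun q => (sigma4 * (Umat (matDx Q) q - Umat Q q * Umat Q q)) i j) p :=
      entryDiffAt_mul (fun _ => sigma4) _ (fun i j => differentiableAt_const _) hW
    have hB : ∀ i j, DifferentiableAt ℝ
        (fun q => (Complex.I • (sigma4 * (Umat (matDx Q) q - Umat Q q * Umat Q q))) i j)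
        p := by
      intro i j
      simp only [Matrix.smul_apply, smul_eq_mul]
      exact (hSW i j).const_mul _
    have e1 : dmat (1, 0)
        (fun q => (-2 * Complex.I * lam ^ 2) • sigma4 + (2 * lam) • Umat Q q) p =
        (2 * lam) • Umat (matDx Q) p := by
      rw [dmat_add (fun _ => (-2 * Complex.I * lam ^ 2) • sigma4)
          (fun q => (2 * lam) • Umat Q q) (fun i j => differentiableAt_const _) hA2,
        dmat_const, dmat_smul _ _ (fun i j => (hUQd i j) p), dmat_Umat Q, zero_add]
      rfl
    have e2 : dmat (1, 0)
        (fun q => Complex.I • (sigma4 * (Umat (matDx Q) q - Umat Q q * Umat Q q))) p =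
        Complex.I • (sigma4 * (Umat (matDx (matDx Q)) p -
          (Umat (matDx Q) p * Umat Q p + Umat Q p * Umat (matDx Q) p))) := by
      rw [dmat_smul _ _ hSW,
        dmat_mul (fun _ => sigma4) _ (fun i j => differentiableAt_const _) hW,
        dmat_const,
        dmat_sub _ _ (fun i j => (hUQxd i j) p)
          (entryDiffAt_mul _ _ (fun i j => (hUQd i j) p) (fun i j => (hUQd i j) p)),
        dmat_mul _ _ (fun i j => (hUQd i j) p) (fun i j => (hUQd i j) p),
        dmat_Umat, dmat_Umat]
      simp only [zero_mul, zero_add]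
      rfl
    rw [matDx_eq, hVeq, dmat_add _ _ hA hB, e1, e2]
  have key : ∀ (lam : ℂ) (p : ℝ × ℝ),
      matDt (Umat Q) p - matDx (Vmat Q lam) p +
        (((-Complex.I * lam) • sigma4 + Umat Q p) * Vmat Q lam p -
          Vmat Q lam p * ((-Complex.I * lam) • sigma4 + Umat Q p)) =
      Umat (matDt Q) p - Complex.I • (sigma4 * (Umat (matDx (matDx Q)) p -
        (2 : ℂ) • (Umat Q p * (Umat Q p * Umat Q p)))) := by
    intro lam p
    have hVp : Vmat Q lam p = (-2 * Complex.I * lam ^ 2) • sigma4 + (2 * lam) • Umat Q p +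
        Complex.I • (sigma4 * (Umat (matDx Q) p - Umat Q p * Umat Q p)) := by
      simp only [Vmat, hUx]
    rw [hUt, hVx lam p, hVp]
    exact reduce sigma4 (Umat Q p) (Umat (matDx Q) p) (Umat (matDx (matDx Q)) p)
      (Umat (matDt Q) p) sigma4_sq (offdiag_anticomm _ _) (offdiag_anticomm _ _) lam
  constructor
  · intro hGP lam p
    rw [key lam p]
    exact (key2aux (Q p) (matDt Q p) (matDx (matDx Q) p)).mpr (hGP p)
  · intro h p
    have h0 := h 0 p
    rw [key 0 p] at h0
    exact (key2aux (Q p) (matDt Q p) (matDx (matDx Q) p)).mp h0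
end

section
/- Let N ≥ 1, m₁,…,m_N ∈ ℕ, and for each j let g_{j,0},…,g_{j,m_j} be symmetric 2×2 complex matrices. Let Â be the block-diagonal complex matrix of size 𝒩 = 2·Σ_{j=1}^N (m_j+1) whose j-th diagonal block is the (m_j+1)×(m_j+1) block matrix (of 2×2 blocks) with (r,s)-block equal to (g_{j,r−s})† when s ≤ r and to 0 when s > r. Let Γ be the block-diagonal matrix diag(Γ₁⊗I₂,…,Γ_N⊗I₂), where Γ_j is the (m_j+1)×(m_j+1) matrix with ones on the antidiagonal and zeros elsewhere. Then Γ·Â = Âᵀ·Γ and Γ·conj(Â) = Â†·Γ. -/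
open scoped Matrix

/-- The block-diagonal, block-lower-triangular matrix `Â` whose `j`-th diagonal block has
`(r,s)` (zero-based) `2×2` block equal to `(g_{j,r−s})†` for `s ≤ r` and `0` otherwise. -/
noncomputable def AhatMat (N : ℕ) (m : Fin N → ℕ)
    (g : (j : Fin N) → ℕ → Matrix (Fin 2) (Fin 2) ℂ) :
    Matrix ((j : Fin N) × (Fin (m j + 1) × Fin 2)) ((j : Fin N) × (Fin (m j + 1) × Fin 2)) ℂ :=
  Matrix.of fun p q =>
    if p.1 = q.1 ∧ (q.2.1 : ℕ) ≤ (p.2.1 : ℕ) then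
      ((g p.1 ((p.2.1 : ℕ) - (q.2.1 : ℕ)))ᴴ) p.2.2 q.2.2
    else 0

/-- The block-diagonal matrix `Γ = diag(Γ₁⊗I₂,…,Γ_N⊗I₂)`, where `Γ_j` is the
`(m_j+1)×(m_j+1)` antidiagonal permutation matrix. -/
noncomputable def GamMat (N : ℕ) (m : Fin N → ℕ) :
    Matrix ((j : Fin N) × (Fin (m j + 1) × Fin 2)) ((j : Fin N) × (Fin (m j + 1) × Fin 2)) ℂ :=
  Matrix.of fun p q =>
    if p.1 = q.1 ∧ (p.2.1 : ℕ) + (q.2.1 : ℕ) = m p.1 ∧ p.2.2 = q.2.2 then 1 else 0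

lemma gam_mul_apply (N : ℕ) (m : Fin N → ℕ)
    (M : Matrix ((j : Fin N) × (Fin (m j + 1) × Fin 2)) ((j : Fin N) × (Fin (m j + 1) × Fin 2)) ℂ)
    (p q : (j : Fin N) × (Fin (m j + 1) × Fin 2)) :
    (GamMat N m * M) p q = M ⟨p.1, (p.2.1.rev, p.2.2)⟩ q := by
  rw [Matrix.mul_apply]
  rw [Finset.sum_eq_single (⟨p.1, (p.2.1.rev, p.2.2)⟩ : (j : Fin N) × (Fin (m j + 1) × Fin 2))]
  · have hc : p.1 = p.1 ∧ (p.2.1 : ℕ) + (p.2.1.rev : ℕ) = m p.1 ∧ p.2.2 = p.2.2 :=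
      ⟨rfl, by have := p.2.1.isLt; simp only [Fin.val_rev]; omega, rfl⟩
    have h1 : GamMat N m p ⟨p.1, (p.2.1.rev, p.2.2)⟩ = 1 := by
      simp only [GamMat, Matrix.of_apply]; simp; omega
    rw [h1, one_mul]
  · rintro ⟨j', b, t⟩ - hr
    obtain ⟨j, a, s⟩ := p
    have h0 : GamMat N m ⟨j, (a, s)⟩ ⟨j', (b, t)⟩ = 0 := by
      simp only [GamMat, Matrix.of_apply]
      rw [if_neg]
      rintro ⟨h1, h2, h3⟩
      subst h1
      have hb : b = a.rev := by
        apply Fin.ext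
        have := a.isLt
        simp only [Fin.val_rev]
        omega
      subst hb
      subst h3
      exact hr rfl
    rw [h0, zero_mul]
  · intro h; exact absurd (Finset.mem_univ _) h

lemma mul_gam_apply (N : ℕ) (m : Fin N → ℕ)
    (M : Matrix ((j : Fin N) × (Fin (m j + 1) × Fin 2)) ((j : Fin N) × (Fin (m j + 1) × Fin 2)) ℂ)
    (p q : (j : Fin N) × (Fin (m j + 1) × Fin 2)) :
    (M * GamMat N m) p q = M p ⟨q.1, (q.2.1.rev, q.2.2)⟩ := by
  rw [Matrix.mul_apply]
  rw [Finset.sum_eq_single (⟨q.1, (q.2.1.rev, q.2.2)⟩ : (j : Fin N) × (Fin (m j + 1) × Fin 2))]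
  · have hc : q.1 = q.1 ∧ (q.2.1.rev : ℕ) + (q.2.1 : ℕ) = m q.1 ∧ q.2.2 = q.2.2 :=
      ⟨rfl, by have := q.2.1.isLt; simp only [Fin.val_rev]; omega, rfl⟩
    have h1 : GamMat N m ⟨q.1, (q.2.1.rev, q.2.2)⟩ q = 1 := by
      simp only [GamMat, Matrix.of_apply]; simp; omega
    rw [h1, mul_one]
  · rintro ⟨j', b, t⟩ - hr
    obtain ⟨j, a, s⟩ := q
    have h0 : GamMat N m ⟨j', (b, t)⟩ ⟨j, (a, s)⟩ = 0 := by
      simp only [GamMat, Matrix.of_apply]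
      rw [if_neg]
      rintro ⟨h1, h2, h3⟩
      subst h1
      have hb : b = a.rev := by
        apply Fin.ext
        have := a.isLt
        simp only [Fin.val_rev]
        omega
      subst hb
      subst h3
      exact hr rfl
    rw [h0, mul_zero]
  · intro h; exact absurd (Finset.mem_univ _) h

/-- If each `g_{j,n}` (`0 ≤ n ≤ m_j`) is a symmetric `2×2` complex matrix, then
`Γ·Â = Âᵀ·Γ` and `Γ·conj(Â) = Â†·Γ`. -/
theorem gamma_Ahat_symmetry (N : ℕ) (hN : 1 ≤ N) (m : Fin N → ℕ)
    (g : (j : Fin N) → ℕ → Matrix (Fin 2) (Fin 2) ℂ)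
    (hg : ∀ j n, n ≤ m j → (g j n)ᵀ = g j n) :
    GamMat N m * AhatMat N m g = (AhatMat N m g)ᵀ * GamMat N m ∧
    GamMat N m * (AhatMat N m g).map (starRingEnd ℂ) = (AhatMat N m g)ᴴ * GamMat N m := by
  have key : GamMat N m * AhatMat N m g = (AhatMat N m g)ᵀ * GamMat N m := by
    ext p q
    rw [gam_mul_apply, mul_gam_apply, Matrix.transpose_apply]
    obtain ⟨j, a, s⟩ := p
    obtain ⟨j', b, t⟩ := q
    simp only [AhatMat, Matrix.of_apply]
    have ha := a.isLt
    have hb := b.isLt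
    by_cases hj : j = j'
    · subst hj
      by_cases hab : (a : ℕ) + (b : ℕ) ≤ m j
      · rw [if_pos ⟨rfl, by simp [Fin.val_rev]; omega⟩, if_pos ⟨rfl, by simp [Fin.val_rev]; omega⟩]
        have hn : ((a.rev : ℕ) - b) = ((b.rev : ℕ) - a) := by
          simp only [Fin.val_rev]; omega
        rw [hn]
        have hle : ((b.rev : ℕ) - a) ≤ m j := by simp [Fin.val_rev]; omega
        have hsym := hg j _ hle
        simp only [Matrix.conjTranspose_apply]
        congr 1
        conv_lhs => rw [← hsym]
        rfl
      · rw [if_neg, if_neg]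
        · rintro ⟨-, h⟩; simp only [Fin.val_rev] at h; omega
        · rintro ⟨-, h⟩; simp only [Fin.val_rev] at h; omega
    · rw [if_neg, if_neg]
      · rintro ⟨h, -⟩; exact hj h.symm
      · rintro ⟨h, -⟩; exact hj h
  refine ⟨key, ?_⟩
  have hGconj : (GamMat N m).map (starRingEnd ℂ) = GamMat N m := by
    ext p q
    simp only [GamMat, Matrix.map_apply, Matrix.of_apply]
    split_ifs <;> simp
  calc GamMat N m * (AhatMat N m g).map (starRingEnd ℂ)
      = ((GamMat N m).map (starRingEnd ℂ)) * (AhatMat N m g).map (starRingEnd ℂ) := by rw [hGconj]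
    _ = (GamMat N m * AhatMat N m g).map (starRingEnd ℂ) := by rw [Matrix.map_mul]
    _ = ((AhatMat N m g)ᵀ * GamMat N m).map (starRingEnd ℂ) := by rw [key]
    _ = ((AhatMat N m g)ᵀ).map (starRingEnd ℂ) * (GamMat N m).map (starRingEnd ℂ) := by
        rw [Matrix.map_mul]
    _ = (AhatMat N m g)ᴴ * GamMat N m := by rw [hGconj]; rfl
end

section
/- Let m ∈ ℕ, λ₀ ∈ ℂ, and let χ, ψ₃, ψ₄ be ℂ⁴-valued functions analytic in a neighborhood of λ₀ such that ψ₃(λ₀) and ψ₄(λ₀) are linearly independent over ℂ. Suppose that every derivative of order at most m of the function λ ↦ 𝒢[χ(λ), ψ₃(λ), ψ₄(λ)] vanishes at λ₀. Then there exist vectors α₀, α₁, …, α_m ∈ ℂ² such that for every n ∈ {0,…,m}: χ⁽ⁿ⁾(λ₀)/n! = Σ_{j+k=n, j,k≥0} Ψ⁽ᵏ⁾(λ₀)·α_j/(j!·k!), where Ψ(λ) is the 4×2 matrix with columns ψ₃(λ), ψ₄(λ). Equivalently, there is a ℂ²-valued polynomial α of degree ≤ m with χ(λ) − Ψ(λ)·α(λ)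 = O((λ−λ₀)^{m+1}) as λ → λ₀. -/
open scoped BigOperators

open Filter Matrix

set_option linter.unusedSectionVars false

section PowerSeriesHelpers

variable {E : Type*} [NormedAddCommGroup E] [NormedSpace ℂ E] [CompleteSpace E]

private theorem hfpsa_iteratedDeriv {f : ℂ → E} {p : FormalMultilinearSeries ℂ ℂ E} {z₀ : ℂ}
    (hp : HasFPowerSeriesAt f p z₀) (n : ℕ) :
    iteratedDeriv n f z₀ = (n.factorial : ℂ) • p.coeff n := by
  obtain ⟨r, hr⟩ := hp
  have h := hr.factorial_smul (1 : ℂ) n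
  rw [iteratedDeriv_eq_iteratedFDeriv, ← h, FormalMultilinearSeries.coeff,
    Nat.cast_smul_eq_nsmul]
  rfl

private theorem evEq_iteratedDeriv {f g : ℂ → E} {x : ℂ} (h : f =ᶠ[nhds x] g) (n : ℕ) :
    iteratedDeriv n f x = iteratedDeriv n g x := by
  rw [← iteratedDerivWithin_univ, ← iteratedDerivWithin_univ, iteratedDerivWithin,
    iteratedDerivWithin]
  congr 1
  exact Filter.EventuallyEq.iteratedFDerivWithin_eq (by simpa [nhdsWithin_univ] using h)
    h.self_of_nhds n

private theorem coeff_add' (p q : FormalMultilinearSeries ℂ ℂ E) (n : ℕ) :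
    (p + q).coeff n = p.coeff n + q.coeff n := rfl

private theorem coeff_csmul (c : ℂ) (p : FormalMultilinearSeries ℂ ℂ E) (n : ℕ) :
    (c • p).coeff n = c • p.coeff n := rfl

private theorem hfpsa_const_smul {f : ℂ → E} {p : FormalMultilinearSeries ℂ ℂ E} {x : ℂ} (c : ℂ)
    (hp : HasFPowerSeriesAt f p x) :
    HasFPowerSeriesAt (fun z => c • f z) (c • p) x := by
  rw [hasFPowerSeriesAt_iff] at hp ⊢
  filter_upwards [hp] with z hz
  have h2 := hz.const_smul c
  simp only [coeff_csmul]
  convert h2 using 2 with n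
  rw [smul_comm]

private theorem iteratedDeriv_add_an {f g : ℂ → E} {x : ℂ} (hf : AnalyticAt ℂ f x)
    (hg : AnalyticAt ℂ g x) (n : ℕ) :
    iteratedDeriv n (fun z => f z + g z) x = iteratedDeriv n f x + iteratedDeriv n g x := by
  obtain ⟨p, hp⟩ := hf
  obtain ⟨q, hq⟩ := hg
  have h : iteratedDeriv n (f + g) x = (n.factorial : ℂ) • (p + q).coeff n :=
    hfpsa_iteratedDeriv (hp.add hq) n
  rw [show (fun z => f z + g z) = f + g from rfl, h, coeff_add', smul_add,
    ← hfpsa_iteratedDeriv hp n, ← hfpsa_iteratedDeriv hq n]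

private theorem iteratedDeriv_csmul_an {f : ℂ → E} {x : ℂ} (hf : AnalyticAt ℂ f x) (c : ℂ)
    (n : ℕ) :
    iteratedDeriv n (fun z => c • f z) x = c • iteratedDeriv n f x := by
  obtain ⟨p, hp⟩ := hf
  rw [hfpsa_iteratedDeriv (hfpsa_const_smul c hp) n, coeff_csmul,
    hfpsa_iteratedDeriv hp n, smul_comm]

private theorem iteratedDeriv_sub_an {f g : ℂ → E} {x : ℂ} (hf : AnalyticAt ℂ f x)
    (hg : AnalyticAt ℂ g x) (n : ℕ) :
    iteratedDeriv n (fun z => f z - g z) x = iteratedDeriv n f x - iteratedDeriv n g x := by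
  have h1 : (fun z => f z - g z) = fun z => f z + (-1 : ℂ) • g z := by
    funext z; simp [sub_eq_add_neg]
  rw [h1, iteratedDeriv_add_an hf (analyticAt_const.fun_smul hg) n,
    iteratedDeriv_csmul_an hg (-1) n]
  simp [sub_eq_add_neg]

private theorem iteratedDeriv_sum_an {ι : Type*} {s : Finset ι} {F : ι → ℂ → E} {x : ℂ}
    (hF : ∀ i ∈ s, AnalyticAt ℂ (F i) x) (n : ℕ) :
    iteratedDeriv n (fun z => ∑ i ∈ s, F i z) x = ∑ i ∈ s, iteratedDeriv n (F i) x := by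
  classical
  induction s using Finset.induction_on with
  | empty =>
    simp only [Finset.sum_empty]
    rw [show (fun _ : ℂ => (0:E)) = fun _ => (0:ℂ) • (0:E) by simp,
      iteratedDeriv_csmul_an analyticAt_const 0 n]
    simp
  | @insert a s' hni ih =>
    rw [Finset.sum_insert hni]
    have h1 : (fun z => ∑ i ∈ insert a s', F i z) = fun z => F a z + ∑ i ∈ s', F i z := by
      funext z; rw [Finset.sum_insert hni]
    rw [h1, iteratedDeriv_add_an (hF a (Finset.mem_insert_self a s'))
      (Finset.analyticAt_fun_sum s' fun i hi => hF i (Finset.mem_insert_of_mem hi)) n,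
      ih fun i hi => hF i (Finset.mem_insert_of_mem hi)]

/-- power series of `(z - z₀)^N • g z` -/
private noncomputable def shiftSeries (N : ℕ) (q : FormalMultilinearSeries ℂ ℂ E) :
    FormalMultilinearSeries ℂ ℂ E :=
  fun n => ContinuousMultilinearMap.mkPiRing ℂ (Fin n) (if N ≤ n then q.coeff (n - N) else 0)

private theorem shiftSeries_coeff (N : ℕ) (q : FormalMultilinearSeries ℂ ℂ E) (n : ℕ) :
    (shiftSeries N q).coeff n = if N ≤ n then q.coeff (n - N) else 0 := by
  show ContinuousMultilinearMap.mkPiRing ℂ (Fin n) _ _ = _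
  rw [ContinuousMultilinearMap.mkPiRing_apply]
  simp [Pi.one_apply]

private theorem hfpsa_shift {g : ℂ → E} {q : FormalMultilinearSeries ℂ ℂ E} {z₀ : ℂ} (N : ℕ)
    (hq : HasFPowerSeriesAt g q z₀) :
    HasFPowerSeriesAt (fun z => (z - z₀) ^ N • g z) (shiftSeries N q) z₀ := by
  rw [hasFPowerSeriesAt_iff] at hq ⊢
  filter_upwards [hq] with z hz
  simp only [add_sub_cancel_left]
  have h1 : HasSum (fun n => (fun i => z ^ i • (shiftSeries N q).coeff i) (n + N))
      (z ^ N • g (z₀ + z)) := by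
    have h0 := hz.const_smul (z ^ N)
    convert h0 using 2 with n
    simp only [shiftSeries_coeff, if_pos (Nat.le_add_left N n), Nat.add_sub_cancel]
    rw [smul_smul, pow_add, mul_comm]
  refine (hasSum_nat_add_iff' (f := fun i => z ^ i • (shiftSeries N q).coeff i) N).mp ?_
  have hzero : ∑ i ∈ Finset.range N, z ^ i • (shiftSeries N q).coeff i = 0 :=
    Finset.sum_eq_zero fun i hi => by
      rw [shiftSeries_coeff, if_neg (by simp at hi; omega), smul_zero]
  rw [hzero, sub_zero]
  exact h1

private theorem iteratedDeriv_pow_smul {g : ℂ → E} {z₀ : ℂ} (hg : AnalyticAt ℂ g z₀) (N k : ℕ) :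
    iteratedDeriv k (fun z => (z - z₀) ^ N • g z) z₀ =
      if N ≤ k then (k.factorial : ℂ) • (((k - N).factorial : ℂ))⁻¹ • iteratedDeriv (k - N) g z₀
      else 0 := by
  obtain ⟨q, hq⟩ := hg
  rw [hfpsa_iteratedDeriv (hfpsa_shift N hq) k, shiftSeries_coeff]
  by_cases h : N ≤ k
  · rw [if_pos h, if_pos h, hfpsa_iteratedDeriv hq (k - N), smul_smul, smul_smul]
    congr 1
    rw [mul_assoc, inv_mul_cancel₀ (by exact_mod_cast Nat.factorial_ne_zero (k - N)), mul_one]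
  · rw [if_neg h, if_neg h, smul_zero]

private theorem analytic_factor {f : ℂ → E} {z₀ : ℂ} (hf : AnalyticAt ℂ f z₀) (N : ℕ)
    (hvan : ∀ k < N, iteratedDeriv k f z₀ = 0) :
    ∃ g : ℂ → E, AnalyticAt ℂ g z₀ ∧
      g z₀ = ((N.factorial : ℂ))⁻¹ • iteratedDeriv N f z₀ ∧
      ∀ᶠ z in nhds z₀, f z = (z - z₀) ^ N • g z := by
  obtain ⟨p, hp⟩ := hf
  have hc : ∀ k < N, p.coeff k = 0 := by
    intro k hk
    have h1 := hfpsa_iteratedDeriv hp k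
    rw [hvan k hk] at h1
    have h2 := h1.symm
    rw [smul_eq_zero] at h2
    rcases h2 with h2 | h2
    · exact absurd h2 (by exact_mod_cast Nat.factorial_ne_zero k)
    · exact h2
  set g := (Function.swap dslope z₀)^[N] f with hgdef
  have hq : HasFPowerSeriesAt g (FormalMultilinearSeries.fslope^[N] p) z₀ :=
    hp.has_fpower_series_iterate_dslope_fslope N
  refine ⟨g, ⟨_, hq⟩, ?_, ?_⟩
  · have h1 : g z₀ = (FormalMultilinearSeries.fslope^[N] p).coeff 0 :=
      (hq.coeff_zero 1).symm
    rw [h1, FormalMultilinearSeries.coeff_iterate_fslope, Nat.zero_add,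
      hfpsa_iteratedDeriv hp N, smul_smul,
      inv_mul_cancel₀ (by exact_mod_cast Nat.factorial_ne_zero N), one_smul]
  · have hq' := hasFPowerSeriesAt_iff'.mp hq
    filter_upwards [hq', hasFPowerSeriesAt_iff'.mp hp] with z h1 h2
    obtain ⟨s, hs1, hs2⟩ := h2.exists_hasSum_smul_of_apply_eq_zero hc
    rw [← hs1]
    congr 1
    symm
    refine h1.unique ?_
    convert hs2 using 2 with n
    rw [FormalMultilinearSeries.coeff_iterate_fslope]

end PowerSeriesHelpers

set_option maxHeartbeats 1000000 in
private theorem det_fin_four' (M : Matrix (Fin 4) (Fin 4) ℂ) : M.det =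
    M 0 0 * (M 1 1 * (M 2 2 * M 3 3 - M 2 3 * M 3 2) - M 1 2 * (M 2 1 * M 3 3 - M 2 3 * M 3 1) + M 1 3 * (M 2 1 * M 3 2 - M 2 2 * M 3 1))
  - M 0 1 * (M 1 0 * (M 2 2 * M 3 3 - M 2 3 * M 3 2) - M 1 2 * (M 2 0 * M 3 3 - M 2 3 * M 3 0) + M 1 3 * (M 2 0 * M 3 2 - M 2 2 * M 3 0))
  + M 0 2 * (M 1 0 * (M 2 1 * M 3 3 - M 2 3 * M 3 1) - M 1 1 * (M 2 0 * M 3 3 - M 2 3 * M 3 0) + M 1 3 * (M 2 0 * M 3 1 - M 2 1 * M 3 0))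
  - M 0 3 * (M 1 0 * (M 2 1 * M 3 2 - M 2 2 * M 3 1) - M 1 1 * (M 2 0 * M 3 2 - M 2 2 * M 3 0) + M 1 2 * (M 2 0 * M 3 1 - M 2 1 * M 3 0)) := by
  simp [Matrix.det_succ_row_zero, Fin.sum_univ_succ, Matrix.det_fin_three, Fin.succAbove]
  ring

private theorem crossG_apply (u v w : Fin 4 → ℂ) (j : Fin 4) :
    crossG u v w j =
      (Matrix.of ![u, v, w, (Pi.single j 1 : Fin 4 → ℂ)]).det := by
  have htr : ∀ x : Fin 4 → ℂ, (Matrix.of fun i k : Fin 4 => ![u, v, w, x] k i)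
      = (Matrix.of ![u, v, w, x])ᵀ := fun _ => rfl
  simp only [crossG, htr, Matrix.det_transpose, Finset.sum_apply, Pi.smul_apply,
    Pi.single_apply, smul_eq_mul]
  rw [Finset.sum_eq_single j] <;> simp +contextual [eq_comm]

private theorem crossG_smul_left (c : ℂ) (u v w : Fin 4 → ℂ) :
    crossG (c • u) v w = c • crossG u v w := by
  funext j
  simp only [crossG_apply, Pi.smul_apply, smul_eq_mul, det_fin_four', Matrix.of_apply]
  simp
  ring

private theorem crossG_sub_span (u s v w : Fin 4 → ℂ) (a b : ℂ) (hs : s = a • v + b • w) :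
    crossG (u - s) v w = crossG u v w := by
  subst hs
  funext j
  simp only [crossG_apply, det_fin_four', Matrix.of_apply]
  simp
  ring

private theorem analyticAt_det {n : ℕ} {M : ℂ → Matrix (Fin n) (Fin n) ℂ} {x : ℂ}
    (h : ∀ i j, AnalyticAt ℂ (fun z => M z i j) x) :
    AnalyticAt ℂ (fun z => (M z).det) x := by
  simp only [Matrix.det_apply]
  apply Finset.analyticAt_fun_sum
  intro σ _
  have h1 : AnalyticAt ℂ (fun z => ∏ i, M z (σ i) i) x :=
    Finset.analyticAt_fun_prod _ fun i _ => h (σ i) i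
  have h2 : (fun z => Equiv.Perm.sign σ • ∏ i, M z (σ i) i)
      = fun z => ((Equiv.Perm.sign σ : ℤ) : ℂ) * ∏ i, M z (σ i) i := by
    funext z; simp [Units.smul_def, zsmul_eq_mul]
  rw [h2]
  exact analyticAt_const.mul h1

private theorem analyticAt_crossG {f g h : ℂ → Fin 4 → ℂ} {x : ℂ}
    (hf : AnalyticAt ℂ f x) (hg : AnalyticAt ℂ g x) (hh : AnalyticAt ℂ h x) :
    AnalyticAt ℂ (fun z => crossG (f z) (g z) (h z)) x := by
  apply analyticAt_pi_iff.mpr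
  intro j
  have he : (fun z => crossG (f z) (g z) (h z) j)
      = fun z => (Matrix.of ![f z, g z, h z, (Pi.single j 1 : Fin 4 → ℂ)]).det := by
    funext z; rw [crossG_apply]
  rw [he]
  apply analyticAt_det
  intro i k
  fin_cases i
  · simpa using analyticAt_pi_iff.mp hf k
  · simpa using analyticAt_pi_iff.mp hg k
  · simpa using analyticAt_pi_iff.mp hh k
  · simpa using analyticAt_const (v := (Pi.single j 1 : Fin 4 → ℂ) k)

private theorem crossG_zero_span {u v w : Fin 4 → ℂ} (h : crossG u v w = 0)
    (hli : LinearIndependent ℂ ![v, w]) : ∃ a b : ℂ, u = a • v + b • w := by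
  by_cases hu : u ∈ Submodule.span ℂ ({v, w} : Set (Fin 4 → ℂ))
  · obtain ⟨a, b, hab⟩ := Submodule.mem_span_pair.mp hu
    exact ⟨a, b, hab.symm⟩
  exfalso
  have hr2 : Set.range ![v, w] = {v, w} := by
    simp [Matrix.range_cons, Matrix.range_empty, Set.pair_comm]
  have hli3 : LinearIndependent ℂ ![u, v, w] := by
    rw [show (![u, v, w] : Fin 3 → Fin 4 → ℂ) = Fin.cons u ![v, w] from rfl,
      linearIndependent_fin_cons]
    exact ⟨hli, by rwa [hr2]⟩
  obtain ⟨xx, hxx⟩ : ∃ xx, xx ∉ Submodule.span ℂ (Set.range ![u, v, w]) := by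
    by_contra hc
    push_neg at hc
    have htop : Submodule.span ℂ (Set.range ![u, v, w]) = ⊤ :=
      Submodule.eq_top_iff'.mpr hc
    have h4 := finrank_le_of_span_eq_top htop
    rw [Module.finrank_fin_fun] at h4
    simp at h4
  have hsnoc : (![u, v, w, xx] : Fin 4 → Fin 4 → ℂ) = Fin.snoc ![u, v, w] xx := by
    funext i; fin_cases i <;> rfl
  have hli4 : LinearIndependent ℂ ![u, v, w, xx] := by
    rw [hsnoc, linearIndependent_fin_snoc]
    exact ⟨hli3, hxx⟩
  have hdet : (Matrix.of ![u, v, w, xx]).det ≠ 0 := by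
    have hunit : IsUnit (Matrix.of ![u, v, w, xx]) :=
      Matrix.linearIndependent_rows_iff_isUnit.mp hli4
    exact ((Matrix.isUnit_iff_isUnit_det _).mp hunit).ne_zero
  apply hdet
  have h0 := congrFun h 0
  have h1 := congrFun h 1
  have h2 := congrFun h 2
  have h3 := congrFun h 3
  rw [crossG_apply] at h0 h1 h2 h3
  simp only [det_fin_four', Matrix.of_apply, Pi.zero_apply] at h0 h1 h2 h3 ⊢
  simp [Pi.single_apply] at h0 h1 h2 h3
  simp
  linear_combination xx 0 * h0 + xx 1 * h1 + xx 2 * h2 + xx 3 * h3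

/-- If `χ, ψ₃, ψ₄ : ℂ → ℂ⁴` are analytic at `z₀`, `ψ₃(z₀)` and `ψ₄(z₀)` are linearly
independent, and all derivatives of order `≤ m` of `λ ↦ 𝒢[χ(λ), ψ₃(λ), ψ₄(λ)]`
vanish at `z₀`, then there exist vectors `α₀,…,α_m ∈ ℂ²` such that for all `n ≤ m`,
`χ⁽ⁿ⁾(z₀)/n! = Σ_{j+k=n} (α_j).1 • ψ₃⁽ᵏ⁾(z₀)/(j! k!) + (α_j).2 • ψ₄⁽ᵏ⁾(z₀)/(j! k!)`,
i.e. `χ⁽ⁿ⁾(z₀)/n! = Σ_{j+k=n} Ψ⁽ᵏ⁾(z₀)·α_j/(j! k!)` where `Ψ` has columns `ψ₃, ψ₄`. -/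
theorem chi_expansion_of_crossG_vanishing (m : ℕ) (z₀ : ℂ) (χ ψ₃ ψ₄ : ℂ → Fin 4 → ℂ)
    (hχ : AnalyticAt ℂ χ z₀) (h₃ : AnalyticAt ℂ ψ₃ z₀) (h₄ : AnalyticAt ℂ ψ₄ z₀)
    (hli : LinearIndependent ℂ ![ψ₃ z₀, ψ₄ z₀])
    (hvan : ∀ n ≤ m, iteratedDeriv n (fun z => crossG (χ z) (ψ₃ z) (ψ₄ z)) z₀ = 0) :
    ∃ α : ℕ → ℂ × ℂ, ∀ n ≤ m,
      ((Nat.factorial n : ℂ))⁻¹ • iteratedDeriv n χ z₀ =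
        ∑ j ∈ Finset.range (n + 1),
          ((Nat.factorial j : ℂ) * (Nat.factorial (n - j) : ℂ))⁻¹ •
            ((α j).1 • iteratedDeriv (n - j) ψ₃ z₀ +
              (α j).2 • iteratedDeriv (n - j) ψ₄ z₀) := by
  suffices H : ∀ M, M ≤ m → ∃ α : ℕ → ℂ × ℂ, ∀ n ≤ M,
      ((Nat.factorial n : ℂ))⁻¹ • iteratedDeriv n χ z₀ =
        ∑ j ∈ Finset.range (n + 1),
          ((Nat.factorial j : ℂ) * (Nat.factorial (n - j) : ℂ))⁻¹ •
            ((α j).1 • iteratedDeriv (n - j) ψ₃ z₀ +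
              (α j).2 • iteratedDeriv (n - j) ψ₄ z₀) from H m le_rfl
  intro M
  induction M with
  | zero =>
    intro _
    have h0 := hvan 0 (Nat.zero_le m)
    rw [iteratedDeriv_zero] at h0
    obtain ⟨a, b, hab⟩ := crossG_zero_span h0 hli
    refine ⟨fun _ => (a, b), fun n hn => ?_⟩
    interval_cases n
    simp [iteratedDeriv_zero, hab]
  | succ M ih =>
    intro hM1
    obtain ⟨α, hα⟩ := ih (by omega)
    -- the correction functions
    set Θ : ℕ → ℂ → Fin 4 → ℂ :=
      fun j z => ((j.factorial : ℂ))⁻¹ • ((α j).1 • ψ₃ z + (α j).2 • ψ₄ z) with hΘdef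
    have hΘan : ∀ j, AnalyticAt ℂ (Θ j) z₀ := fun j =>
      analyticAt_const.fun_smul ((analyticAt_const.fun_smul h₃).fun_add (analyticAt_const.fun_smul h₄))
    have hΘd : ∀ j i, iteratedDeriv i (Θ j) z₀ =
        ((j.factorial : ℂ))⁻¹ • ((α j).1 • iteratedDeriv i ψ₃ z₀ +
          (α j).2 • iteratedDeriv i ψ₄ z₀) := by
      intro j i
      have hA : AnalyticAt ℂ (fun z => (α j).1 • ψ₃ z) z₀ := analyticAt_const.fun_smul h₃
      have hB : AnalyticAt ℂ (fun z => (α j).2 • ψ₄ z) z₀ := analyticAt_const.fun_smul h₄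
      have hAB : AnalyticAt ℂ (fun z => (α j).1 • ψ₃ z + (α j).2 • ψ₄ z) z₀ := hA.add hB
      have e1 : iteratedDeriv i (Θ j) z₀ = ((j.factorial : ℂ))⁻¹ •
          iteratedDeriv i (fun z => (α j).1 • ψ₃ z + (α j).2 • ψ₄ z) z₀ :=
        iteratedDeriv_csmul_an hAB _ i
      have e2 : iteratedDeriv i (fun z => (α j).1 • ψ₃ z + (α j).2 • ψ₄ z) z₀ =
          iteratedDeriv i (fun z => (α j).1 • ψ₃ z) z₀ +
            iteratedDeriv i (fun z => (α j).2 • ψ₄ z) z₀ :=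
        iteratedDeriv_add_an hA hB i
      rw [e1, e2, iteratedDeriv_csmul_an h₃ (α j).1 i, iteratedDeriv_csmul_an h₄ (α j).2 i]
    set S : ℂ → Fin 4 → ℂ := fun z => ∑ j ∈ Finset.range (M + 1), (z - z₀) ^ j • Θ j z with hSdef
    have hterman : ∀ j, AnalyticAt ℂ (fun z => (z - z₀) ^ j • Θ j z) z₀ := fun j =>
      (((analyticAt_id).sub analyticAt_const).pow j).smul (hΘan j)
    have hSan : AnalyticAt ℂ S z₀ := Finset.analyticAt_fun_sum _ fun j _ => hterman j
    set ρ : ℂ → Fin 4 → ℂ := fun z => χ z - S z with hρdef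
    have hρan : AnalyticAt ℂ ρ z₀ := hχ.sub hSan
    -- iterated derivatives of S
    have hSd : ∀ k, iteratedDeriv k S z₀ = ∑ j ∈ Finset.range (M + 1),
        (if j ≤ k then (k.factorial : ℂ) • (((k - j).factorial : ℂ))⁻¹ •
          iteratedDeriv (k - j) (Θ j) z₀ else 0) := by
      intro k
      show iteratedDeriv k (fun z => ∑ j ∈ Finset.range (M + 1), (z - z₀) ^ j • Θ j z) z₀ = _
      rw [iteratedDeriv_sum_an (fun j _ => hterman j) k]
      exact Finset.sum_congr rfl fun j _ => iteratedDeriv_pow_smul (hΘan j) j k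
    -- derivative of ρ at order k ≤ M vanishes
    have hρzero : ∀ k ≤ M, iteratedDeriv k ρ z₀ = 0 := by
      intro k hk
      show iteratedDeriv k (fun z => χ z - S z) z₀ = 0
      rw [iteratedDeriv_sub_an hχ hSan k, hSd k]
      have hsum : ∑ j ∈ Finset.range (M + 1),
          (if j ≤ k then (k.factorial : ℂ) • (((k - j).factorial : ℂ))⁻¹ •
            iteratedDeriv (k - j) (Θ j) z₀ else 0)
          = ∑ j ∈ Finset.range (k + 1), (k.factorial : ℂ) • (((k - j).factorial : ℂ))⁻¹ •
            iteratedDeriv (k - j) (Θ j) z₀ := by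
        rw [← Finset.sum_subset (Finset.range_subset_range.mpr (by omega : k + 1 ≤ M + 1))
          (fun x _ hx => by rw [if_neg (by simp at hx; omega)])]
        exact Finset.sum_congr rfl fun j hj => by rw [if_pos (by simp at hj; omega)]
      rw [hsum, sub_eq_zero]
      have hTkχ : iteratedDeriv k χ z₀ =
          (k.factorial : ℂ) • ((k.factorial : ℂ))⁻¹ • iteratedDeriv k χ z₀ := by
        rw [smul_smul, mul_inv_cancel₀ (by exact_mod_cast Nat.factorial_ne_zero k), one_smul]
      rw [hTkχ, hα k hk, Finset.smul_sum]
      refine Finset.sum_congr rfl fun j hj => ?_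
      rw [hΘd j (k - j)]
      have f1 : ((j.factorial : ℂ)) ≠ 0 := by exact_mod_cast Nat.factorial_ne_zero j
      have f2 : (((k - j).factorial : ℂ)) ≠ 0 := by exact_mod_cast Nat.factorial_ne_zero (k - j)
      match_scalars <;> (field_simp; (try ring); (try tauto))
    -- derivative of ρ at order M+1
    have hρN : iteratedDeriv (M + 1) ρ z₀ = iteratedDeriv (M + 1) χ z₀ -
        ∑ j ∈ Finset.range (M + 1), ((M + 1).factorial : ℂ) •
          (((M + 1 - j).factorial : ℂ))⁻¹ • ((j.factorial : ℂ))⁻¹ •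
            ((α j).1 • iteratedDeriv (M + 1 - j) ψ₃ z₀ +
              (α j).2 • iteratedDeriv (M + 1 - j) ψ₄ z₀) := by
      show iteratedDeriv (M + 1) (fun z => χ z - S z) z₀ = _
      rw [iteratedDeriv_sub_an hχ hSan (M + 1), hSd (M + 1)]
      congr 1
      refine Finset.sum_congr rfl fun j hj => ?_
      rw [if_pos (by simp at hj; omega), hΘd j (M + 1 - j)]
      try module
    -- crossG with ρ agrees with crossG with χ
    have hGρ : (fun z => crossG (χ z) (ψ₃ z) (ψ₄ z))
        = fun z => crossG (ρ z) (ψ₃ z) (ψ₄ z) := by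
      funext z
      have hmem : ∃ a b : ℂ, S z = a • ψ₃ z + b • ψ₄ z := by
        refine ⟨∑ j ∈ Finset.range (M + 1), (z - z₀) ^ j * (((j.factorial : ℂ))⁻¹ * (α j).1),
          ∑ j ∈ Finset.range (M + 1), (z - z₀) ^ j * (((j.factorial : ℂ))⁻¹ * (α j).2), ?_⟩
        show ∑ j ∈ Finset.range (M + 1), (z - z₀) ^ j • Θ j z = _
        rw [Finset.sum_smul, Finset.sum_smul, ← Finset.sum_add_distrib]
        refine Finset.sum_congr rfl fun j _ => ?_
        show (z - z₀) ^ j • (((j.factorial : ℂ))⁻¹ • ((α j).1 • ψ₃ z + (α j).2 • ψ₄ z)) = _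
        module
      obtain ⟨a, b, hab⟩ := hmem
      show _ = crossG (χ z - S z) (ψ₃ z) (ψ₄ z)
      exact (crossG_sub_span (χ z) (S z) (ψ₃ z) (ψ₄ z) a b hab).symm
    -- factor ρ
    obtain ⟨σ, hσan, hσ0, hσev⟩ := analytic_factor hρan (M + 1)
      (fun k hk => hρzero k (by omega))
    have hcρ : iteratedDeriv (M + 1) (fun z => crossG (ρ z) (ψ₃ z) (ψ₄ z)) z₀ = 0 := by
      rw [← hGρ]; exact hvan (M + 1) hM1
    have huev : (fun z => crossG (ρ z) (ψ₃ z) (ψ₄ z)) =ᶠ[nhds z₀]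
        fun z => (z - z₀) ^ (M + 1) • crossG (σ z) (ψ₃ z) (ψ₄ z) := by
      filter_upwards [hσev] with z hz
      rw [hz, crossG_smul_left]
    have huan : AnalyticAt ℂ (fun z => crossG (σ z) (ψ₃ z) (ψ₄ z)) z₀ :=
      analyticAt_crossG hσan h₃ h₄
    have hu0 : crossG (σ z₀) (ψ₃ z₀) (ψ₄ z₀) = 0 := by
      have h1 := evEq_iteratedDeriv huev (M + 1)
      rw [hcρ] at h1
      rw [iteratedDeriv_pow_smul huan (M + 1) (M + 1), if_pos le_rfl] at h1
      simp only [Nat.sub_self, Nat.factorial_zero, Nat.cast_one, inv_one, one_smul,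
        iteratedDeriv_zero] at h1
      have h2 := h1.symm
      rw [smul_eq_zero] at h2
      rcases h2 with h2 | h2
      · exact absurd h2 (by exact_mod_cast Nat.factorial_ne_zero (M + 1))
      · exact h2
    obtain ⟨a, b, hab⟩ := crossG_zero_span hu0 hli
    -- define the new coefficient sequence
    refine ⟨Function.update α (M + 1)
      (((M + 1).factorial : ℂ) * a, ((M + 1).factorial : ℂ) * b), fun n hn => ?_⟩
    rcases Nat.lt_or_ge n (M + 1) with hnM | hnM
    · rw [hα n (by omega)]
      refine Finset.sum_congr rfl fun j hj => ?_
      rw [Function.update_of_ne (by simp at hj; omega) _ α]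
    · have hnn : n = M + 1 := by omega
      subst hnn
      rw [Finset.sum_range_succ]
      have hlast : ((((M + 1).factorial : ℂ)) * (((M + 1 - (M + 1)).factorial : ℂ)))⁻¹ •
          ((Function.update α (M + 1)
              (((M + 1).factorial : ℂ) * a, ((M + 1).factorial : ℂ) * b) (M + 1)).1 •
            iteratedDeriv (M + 1 - (M + 1)) ψ₃ z₀ +
          (Function.update α (M + 1)
              (((M + 1).factorial : ℂ) * a, ((M + 1).factorial : ℂ) * b) (M + 1)).2 •
            iteratedDeriv (M + 1 - (M + 1)) ψ₄ z₀)
          = a • ψ₃ z₀ + b • ψ₄ z₀ := by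
        rw [Function.update_self]
        simp only [Nat.sub_self, iteratedDeriv_zero, Nat.factorial_zero, Nat.cast_one, mul_one]
        have f1 : (((M + 1).factorial : ℂ)) ≠ 0 := by
          exact_mod_cast Nat.factorial_ne_zero (M + 1)
        match_scalars <;> (field_simp; (try ring); (try tauto))
      rw [hlast]
      have hfirst : ∀ j ∈ Finset.range (M + 1),
          ((((j.factorial : ℂ))) * (((M + 1 - j).factorial : ℂ)))⁻¹ •
            ((Function.update α (M + 1)
                (((M + 1).factorial : ℂ) * a, ((M + 1).factorial : ℂ) * b) j).1 •
              iteratedDeriv (M + 1 - j) ψ₃ z₀ +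
            (Function.update α (M + 1)
                (((M + 1).factorial : ℂ) * a, ((M + 1).factorial : ℂ) * b) j).2 •
              iteratedDeriv (M + 1 - j) ψ₄ z₀)
          = (((M + 1).factorial : ℂ))⁻¹ • (((M + 1).factorial : ℂ)) •
              (((M + 1 - j).factorial : ℂ))⁻¹ • ((j.factorial : ℂ))⁻¹ •
              ((α j).1 • iteratedDeriv (M + 1 - j) ψ₃ z₀ +
                (α j).2 • iteratedDeriv (M + 1 - j) ψ₄ z₀) := by
        intro j hj
        rw [Function.update_of_ne (by simp at hj; omega) _ α]
        have f1 : ((j.factorial : ℂ)) ≠ 0 := by exact_mod_cast Nat.factorial_ne_zero j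
        have f2 : (((M + 1 - j).factorial : ℂ)) ≠ 0 := by
          exact_mod_cast Nat.factorial_ne_zero (M + 1 - j)
        have f3 : (((M + 1).factorial : ℂ)) ≠ 0 := by
          exact_mod_cast Nat.factorial_ne_zero (M + 1)
        match_scalars <;> (field_simp; (try ring); (try tauto))
      rw [Finset.sum_congr rfl hfirst, ← Finset.smul_sum]
      have hval : a • ψ₃ z₀ + b • ψ₄ z₀ = (((M + 1).factorial : ℂ))⁻¹ •
          (iteratedDeriv (M + 1) χ z₀ -
            ∑ j ∈ Finset.range (M + 1), ((M + 1).factorial : ℂ) •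
              (((M + 1 - j).factorial : ℂ))⁻¹ • ((j.factorial : ℂ))⁻¹ •
                ((α j).1 • iteratedDeriv (M + 1 - j) ψ₃ z₀ +
                  (α j).2 • iteratedDeriv (M + 1 - j) ψ₄ z₀)) := by
        rw [← hρN, ← hσ0, hab]
      rw [hval, ← smul_add, add_sub_cancel]
end
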